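/- Let p > 1 be real, m ≥ 1 an integer, and let χ : ℝ → [0,1] be a C^∞ function, nonincreasing, with χ(t) = 1 for t ≤ 1/2 and χ(t) = 0 for t ≥ 1. Set K = m·p/(p−1) and ψ(t) = χ(t)^K. Then ψ is m times continuously differentiable on ℝ and there exists a constant C > 0 such that for every integer j with 0 ≤ j ≤ m and every t ∈ ℝ, |ψ^{(j)}(t)| ≤ C · ψ(t)^{1/p}. -/

import Mathlib

open Real
open scoped ContDiff

noncomputable def stmt8g (χ : ℝ → ℝ) (K : ℝ) : ℕ → ℝ → ℝ
  | 0 => fun _ => 1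
  | j + 1 => fun t =>
      (K - j) * deriv χ t * stmt8g χ K j t + χ t * deriv (stmt8g χ K j) t

lemma stmt8g_smooth {χ : ℝ → ℝ} (hχ : ContDiff ℝ (∞ : WithTop ℕ∞) χ) (K : ℝ) :
    ∀ j, ContDiff ℝ (∞ : WithTop ℕ∞) (stmt8g χ K j)
  | 0 => contDiff_const
  | j + 1 => by
    have IH := stmt8g_smooth hχ K j
    have hdχ : ContDiff ℝ (∞ : WithTop ℕ∞) (deriv χ) :=
      (contDiff_infty_iff_deriv.mp hχ).2
    have hdg : ContDiff ℝ (∞ : WithTop ℕ∞) (deriv (stmt8g χ K j)) :=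
      (contDiff_infty_iff_deriv.mp IH).2
    exact ((contDiff_const.mul hdχ).mul IH).add (hχ.mul hdg)

/-- for a smooth nonincreasing cutoff `χ` with values in `[0,1]`, equal to `1`
on `(-∞, 1/2]` and to `0` on `[1,∞)`, the function `ψ = χ^{mp/(p-1)}` is `m` times
continuously differentiable and each derivative `ψ^{(j)}`, `0 ≤ j ≤ m`, is bounded by
`C ψ^{1/p}`. -/
theorem stmt8 (p : ℝ) (hp : 1 < p) (m : ℕ) (hm : 1 ≤ m)
    (χ : ℝ → ℝ) (hχ : ContDiff ℝ ((⊤ : ℕ∞) : WithTop ℕ∞) χ)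
    (hrange : ∀ t, χ t ∈ Set.Icc (0 : ℝ) 1)
    (hmono : Antitone χ)
    (hone : ∀ t ≤ (1 / 2 : ℝ), χ t = 1)
    (hzero : ∀ t, (1 : ℝ) ≤ t → χ t = 0) :
    ContDiff ℝ (m : WithTop ℕ∞) (fun t => χ t ^ ((m : ℝ) * p / (p - 1))) ∧
    ∃ C > (0 : ℝ), ∀ j : ℕ, j ≤ m → ∀ t : ℝ,
      |iteratedDeriv j (fun t => χ t ^ ((m : ℝ) * p / (p - 1))) t| ≤
        C * (χ t ^ ((m : ℝ) * p / (p - 1))) ^ (1 / p) := by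
  set K := (m : ℝ) * p / (p - 1) with hKdef
  have hp0 : (0 : ℝ) < p - 1 := by linarith
  have hm1 : (1 : ℝ) ≤ (m : ℝ) := by exact_mod_cast hm
  have hχ0 : ∀ t, 0 ≤ χ t := fun t => (hrange t).1
  have hχ1 : ∀ t, χ t ≤ 1 := fun t => (hrange t).2
  have hχd : Differentiable ℝ χ := hχ.differentiable (by simp)
  have hKm : K - (m : ℝ) = (m : ℝ) / (p - 1) := by
    rw [hKdef]; field_simp; ring
  have hKm0 : (0 : ℝ) < K - m := by
    rw [hKm]; positivity
  -- derivative of χ^α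
  have hderA : ∀ α : ℝ, 1 ≤ α → ∀ t,
      HasDerivAt (fun s => χ s ^ α) (α * χ t ^ (α - 1) * deriv χ t) t := by
    intro α hα t
    have h := (Real.hasDerivAt_rpow_const (x := χ t) (p := α) (Or.inr hα)).comp t
      (hχd t).hasDerivAt
    simpa [mul_assoc, Function.comp_def] using h
  -- smoothness of χ^α
  have hCD : ∀ n : ℕ, ∀ α : ℝ, (n : ℝ) ≤ α →
      ContDiff ℝ (n : WithTop ℕ∞) (fun t => χ t ^ α) := by
    intro n
    induction n with
    | zero =>
      intro α hα
      rw [Nat.cast_zero, contDiff_zero]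
      exact (Real.continuous_rpow_const (by exact_mod_cast hα)).comp hχ.continuous
    | succ n IH =>
      intro α hα
      have hα' : (n : ℝ) + 1 ≤ α := by push_cast at hα; linarith
      have h1α : (1 : ℝ) ≤ α := by
        have : (0 : ℝ) ≤ (n : ℝ) := Nat.cast_nonneg n
        linarith
      rw [show ((n + 1 : ℕ) : WithTop ℕ∞) = (n : WithTop ℕ∞) + 1 by push_cast; rfl,
        contDiff_succ_iff_deriv]
      refine ⟨fun t => (hderA α h1α t).differentiableAt, ?_, ?_⟩
      · intro h; simp at h
      · have hde : deriv (fun s => χ s ^ α) = fun t => α * χ t ^ (α - 1) * deriv χ t :=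
          funext fun t => (hderA α h1α t).deriv
        rw [hde]
        have hIH := IH (α - 1) (by linarith)
        have hdχ : ContDiff ℝ (n : WithTop ℕ∞) (deriv χ) :=
          ((contDiff_infty_iff_deriv.mp hχ).2).of_le (by exact_mod_cast le_top)
        exact (contDiff_const.mul hIH).mul hdχ
  have hψCD : ContDiff ℝ (m : WithTop ℕ∞) (fun t => χ t ^ K) := by
    refine hCD m K ?_
    linarith
  set g := stmt8g χ K with hgdef
  have hgs : ∀ j, ContDiff ℝ (∞ : WithTop ℕ∞) (g j) := stmt8g_smooth hχ K
  have hgd : ∀ j, Differentiable ℝ (g j) :=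
    fun j => (hgs j).differentiable (by simp)
  -- deriv χ vanishes outside [1/2, 1]
  have hderχ0 : ∀ t : ℝ, t < 1 / 2 ∨ 1 < t → deriv χ t = 0 := by
    rintro t (ht | ht)
    · have hev : χ =ᶠ[nhds t] fun _ => (1 : ℝ) := by
        filter_upwards [Iio_mem_nhds ht] with s hs
        exact hone s (le_of_lt hs)
      rw [hev.deriv_eq, deriv_const]
    · have hev : χ =ᶠ[nhds t] fun _ => (0 : ℝ) := by
        filter_upwards [Ioi_mem_nhds ht] with s hs
        exact hzero s (le_of_lt hs)
      rw [hev.deriv_eq, deriv_const]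
  -- g (j+1) vanishes outside [1/2, 1]
  have hg0 : ∀ j : ℕ, ∀ t : ℝ, t < 1 / 2 ∨ 1 < t →
      deriv (g j) t = 0 ∧ g (j + 1) t = 0 := by
    intro j
    induction j with
    | zero =>
      intro t ht
      constructor
      · show deriv (stmt8g χ K 0) t = 0
        simp [stmt8g]
      · show stmt8g χ K 1 t = 0
        have h1 : deriv (stmt8g χ K 0) t = 0 := by simp [stmt8g]
        simp [stmt8g, hderχ0 t ht, h1]
    | succ j IH =>
      intro t ht
      have hU : IsOpen ({s : ℝ | s < 1 / 2 ∨ 1 < s}) := by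
        exact (isOpen_Iio (a := (1/2 : ℝ))).union (isOpen_Ioi (a := (1 : ℝ)))
      have hdg : deriv (g (j + 1)) t = 0 := by
        have hev : g (j + 1) =ᶠ[nhds t] fun _ => (0 : ℝ) := by
          filter_upwards [hU.mem_nhds ht] with s hs
          exact (IH s hs).2
        rw [hev.deriv_eq, deriv_const]
      refine ⟨hdg, ?_⟩
      show stmt8g χ K (j + 2) t = 0
      have h2 : stmt8g χ K (j + 1) t = 0 := (IH t ht).2
      show (K - (j + 1 : ℕ)) * deriv χ t * stmt8g χ K (j + 1) t
          + χ t * deriv (stmt8g χ K (j + 1)) t = 0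
      rw [hderχ0 t ht]
      rw [show deriv (stmt8g χ K (j + 1)) t = 0 from hdg]
      ring
  -- bounds for g j
  have hbound : ∀ j : ℕ, ∃ B : ℝ, ∀ t, |g j t| ≤ B := by
    intro j
    rcases j with _ | j
    · exact ⟨1, fun t => by show |stmt8g χ K 0 t| ≤ 1; simp [stmt8g]⟩
    · obtain ⟨B, hB⟩ := (isCompact_Icc (a := (1/2 : ℝ)) (b := 1)).exists_bound_of_continuousOn
        ((hgs (j + 1)).continuous.continuousOn)
      refine ⟨max B 0, fun t => ?_⟩
      by_cases ht : t ∈ Set.Icc (1/2 : ℝ) 1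
      · exact le_trans (hB t ht) (le_max_left _ _)
      · have ht' : t < 1 / 2 ∨ 1 < t := by
          rw [Set.mem_Icc] at ht; push_neg at ht
          rcases lt_or_ge t (1/2) with h | h
          · exact Or.inl h
          · exact Or.inr (ht h)
        rw [(hg0 j t ht').2]
        simp
  choose B hB using hbound
  set C := 1 + ∑ i ∈ Finset.range (m + 1), |B i| with hCdef
  have hCpos : 0 < C := by
    have : (0 : ℝ) ≤ ∑ i ∈ Finset.range (m + 1), |B i| :=
      Finset.sum_nonneg fun i _ => abs_nonneg _
    rw [hCdef]; linarith
  have hCj : ∀ j : ℕ, j ≤ m → B j ≤ C := by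
    intro j hj
    have h1 : |B j| ≤ ∑ i ∈ Finset.range (m + 1), |B i| :=
      Finset.single_le_sum (f := fun i => |B i|) (fun i _ => abs_nonneg (B i))
        (Finset.mem_range.mpr (Nat.lt_succ_of_le hj))
    calc B j ≤ |B j| := le_abs_self _
      _ ≤ ∑ i ∈ Finset.range (m + 1), |B i| := h1
      _ ≤ C := by rw [hCdef]; linarith
  -- iterated derivative formula
  have hIter : ∀ j : ℕ, j ≤ m →
      iteratedDeriv j (fun t => χ t ^ K) = fun t => χ t ^ (K - j) * g j t := by
    intro j
    induction j with
    | zero =>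
      intro _
      funext t
      show χ t ^ K = χ t ^ (K - (0 : ℕ)) * stmt8g χ K 0 t
      simp [stmt8g]
    | succ j IH =>
      intro hj
      have hjm : (j : ℝ) + 1 ≤ (m : ℝ) := by exact_mod_cast hj
      have hKj : 1 < K - (j : ℝ) := by linarith
      rw [iteratedDeriv_succ, IH (Nat.le_of_succ_le hj)]
      funext t
      have hgdj : HasDerivAt (g j) (deriv (g j) t) t := (hgd j t).hasDerivAt
      have hχα := hderA (K - j) (le_of_lt hKj) t
      have hprod := hχα.mul hgdj
      rw [show (fun t => χ t ^ (K - (j : ℝ)) * g j t) = ((fun s => χ s ^ (K - (j : ℝ))) * g j) from rfl, hprod.deriv]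
      have hsplit : χ t ^ (K - (j : ℝ)) = χ t ^ (K - j - 1) * χ t := by
        rcases eq_or_lt_of_le (hχ0 t) with h0 | hpos
        · rw [← h0, Real.zero_rpow (by linarith), mul_zero]
        · rw [show K - (j : ℝ) = (K - j - 1) + 1 by ring, Real.rpow_add hpos, Real.rpow_one]
          norm_num
      show (K - (j : ℝ)) * χ t ^ (K - (j : ℝ) - 1) * deriv χ t * g j t
          + χ t ^ (K - (j : ℝ)) * deriv (g j) t
          = χ t ^ (K - ((j : ℕ) + 1 : ℕ)) * g (j + 1) t
      have hg1 : g (j + 1) t = (K - (j : ℝ)) * deriv χ t * g j t + χ t * deriv (g j) t := rfl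
      rw [hg1, hsplit]
      push_cast
      ring
  constructor
  · exact hψCD
  · refine ⟨C, hCpos, ?_⟩
    intro j hj t
    rw [hIter j hj]
    have hrp : (0 : ℝ) ≤ χ t ^ (K - j) := Real.rpow_nonneg (hχ0 t) _
    have habs : |χ t ^ (K - (j : ℝ)) * g j t| = χ t ^ (K - j) * |g j t| := by
      rw [abs_mul, abs_of_nonneg hrp]
    rw [habs]
    have hKp : K * (1 / p) = K - (m : ℝ) := by
      rw [hKm, hKdef]; field_simp
    have hpow : (χ t ^ K) ^ (1 / p) = χ t ^ (K - (m : ℝ)) := by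
      rw [← Real.rpow_mul (hχ0 t), hKp]
    have hjm : (j : ℝ) ≤ (m : ℝ) := by exact_mod_cast hj
    have h1 : χ t ^ (K - (j : ℝ)) ≤ χ t ^ (K - (m : ℝ)) :=
      Real.rpow_le_rpow_of_exponent_ge' (hχ0 t) (hχ1 t) (le_of_lt hKm0) (by linarith)
    have h2 : |g j t| ≤ C := le_trans (hB j t) (hCj j hj)
    calc χ t ^ (K - (j : ℝ)) * |g j t|
        ≤ χ t ^ (K - (m : ℝ)) * C :=
          mul_le_mul h1 h2 (abs_nonneg _) (Real.rpow_nonneg (hχ0 t) _)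
      _ = C * (χ t ^ K) ^ (1 / p) := by rw [hpow]; ring
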